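/- If a vertex occurrence of graph-vertex u at level k of the uniqueness tree T(v) is unique and vertex w is a neighbor of u in G, then w appears at level k+1 of T(v); consequently, every vertex of G appearing at some level of T(v) lies in the connected component of v. -/
import Mathlib


namespace UT

variable {V : Type*} [Fintype V] [DecidableEq V]

/-- The multiset of graph-vertex labels occurring at level `k` of the uniqueness tree of `v`:
level 0 is `{v}`; each unique occurrence (a vertex appearing exactly once at its level)
spawns one child per graph-neighbor, and non-unique occurrences spawn none. -/
def uLevel (G : SimpleGraph V) [DecidableRel G.Adj] (v : V) : ℕ → Multiset V
  | 0 => {v}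
  | k + 1 =>
      ((uLevel G v k).filter fun u => (uLevel G v k).count u = 1).bind
        fun u => (G.neighborFinset u).val

end UT

/-- If an occurrence of `u` at level `k` of the uniqueness tree of `v` is unique and `w` is a
neighbor of `u`, then `w` appears at level `k + 1`; consequently every vertex appearing at
some level of the tree lies in the connected component of `v`. -/
theorem uLevel_child_and_reachable {V : Type*} [Fintype V] [DecidableEq V]
    (G : SimpleGraph V) [DecidableRel G.Adj] (v : V) :
    (∀ (k : ℕ) (u w : V), (UT.uLevel G v k).count u = 1 → G.Adj u w →
        w ∈ UT.uLevel G v (k + 1)) ∧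
      ∀ (k : ℕ) (u : V), u ∈ UT.uLevel G v k → G.Reachable v u := by
  constructor
  · intro k u w hc hadj
    show w ∈ ((UT.uLevel G v k).filter fun u => (UT.uLevel G v k).count u = 1).bind
        fun u => (SimpleGraph.neighborFinset G u).val
    rw [Multiset.mem_bind]
    refine ⟨u, ?_, ?_⟩
    · rw [Multiset.mem_filter]
      exact ⟨Multiset.count_pos.mp (by omega), hc⟩
    · simpa [SimpleGraph.mem_neighborFinset] using hadj
  · intro k
    induction k with
    | zero =>
      intro u hu
      simp only [UT.uLevel, Multiset.mem_singleton] at hu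
      subst hu; exact SimpleGraph.Reachable.refl u
    | succ n ih =>
      intro u hu
      simp only [UT.uLevel, Multiset.mem_bind, Multiset.mem_filter] at hu
      obtain ⟨a, ⟨ha, _⟩, hu⟩ := hu
      have : G.Adj a u := by simpa [SimpleGraph.mem_neighborFinset] using hu
      exact (ih a ha).trans this.reachable
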